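/- Arm Lemma (endpoint direction). Let u_0, u_1, ..., u_m and v_0, v_1, ..., v_m be points of ℝ² (identified with ℂ) such that: (i) u_0 = v_0; (ii) |u_j − u_{j−1}| = |v_j − v_{j−1}| for j = 1, ..., m; (iii) for each j = 1, ..., m the differences u_j − u_{j−1} and v_j − v_{j−1} are nonzero and their arguments lie in the open interval (−π/10, π/10); (iv) arg(v_j − v_{j−1}) ≥ arg(u_j − u_{j−1}) for each j = 1, ..., m. Then either v_m = u_m, or v_m − u_m is nonzero with arg(v_m − u_m) ∈ (π/2 − π/10, π/2 + π/10). -/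

import Mathlib

open Complex Real Set

lemma cone_add (t : ℝ) {a b : ℂ}
    (ha : a = 0 ∨ (0 < a.im ∧ |a.re| < t * a.im))
    (hb : b = 0 ∨ (0 < b.im ∧ |b.re| < t * b.im)) :
    a + b = 0 ∨ (0 < (a + b).im ∧ |(a + b).re| < t * (a + b).im) := by
  rcases ha with rfl | ⟨ha1, ha2⟩
  · simpa using hb
  rcases hb with rfl | ⟨hb1, hb2⟩
  · simpa using Or.inr ⟨ha1, ha2⟩
  · refine Or.inr ⟨?_, ?_⟩
    · simp only [Complex.add_im]; linarith
    · simp only [Complex.add_re, Complex.add_im]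
      calc |a.re + b.re| ≤ |a.re| + |b.re| := abs_add_le _ _
        _ < t * a.im + t * b.im := by linarith
        _ = t * (a.im + b.im) := by ring

lemma abs_sin_lt_tan_mul_cos {θ x : ℝ} (hθ : θ < π / 2) (hx : |x| < θ) :
    |Real.sin x| < Real.tan θ * Real.cos x := by
  have hx2 : |x| < π / 2 := hx.trans hθ
  have hc : 0 < Real.cos |x| := Real.cos_pos_of_mem_Ioo
    ⟨by linarith [abs_nonneg x, Real.pi_pos], hx2⟩
  have h1 : |Real.sin x| = Real.sin |x| := by
    rcases le_or_gt 0 x with h | h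
    · rw [_root_.abs_of_nonneg h, _root_.abs_of_nonneg
        (Real.sin_nonneg_of_nonneg_of_le_pi h (by linarith [le_abs_self x, Real.pi_pos]))]
    · rw [_root_.abs_of_neg h, Real.sin_neg, _root_.abs_of_neg
        (Real.sin_neg_of_neg_of_neg_pi_lt h (by linarith [neg_abs_le x, Real.pi_pos]))]
  have htan : Real.tan |x| < Real.tan θ :=
    Real.tan_lt_tan_of_nonneg_of_lt_pi_div_two (abs_nonneg x) hθ hx
  have h2 : Real.sin |x| = Real.tan |x| * Real.cos |x| := by
    rw [Real.tan_eq_sin_div_cos, div_mul_cancel₀ _ hc.ne']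
  rw [h1, ← Real.cos_abs x, h2]
  exact mul_lt_mul_of_pos_right htan hc

lemma key_step (θ : ℝ) (hθ0 : 0 < θ) (hθ : θ < π / 2) {z w : ℂ}
    (hz : z ≠ 0) (hab : ‖z‖ = ‖w‖)
    (hz1 : z.arg ∈ Set.Ioo (-θ) θ) (hw1 : w.arg ∈ Set.Ioo (-θ) θ)
    (hle : z.arg ≤ w.arg) :
    w - z = 0 ∨ (0 < (w - z).im ∧ |(w - z).re| < Real.tan θ * (w - z).im) := by
  rcases eq_or_lt_of_le hle with heq | hlt
  · exact Or.inl (by rw [Complex.ext_norm_arg hab.symm heq.symm, sub_self])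
  right
  set r : ℝ := ‖z‖ with hr
  have hrpos : 0 < r := norm_pos_iff.mpr hz
  set α := z.arg
  set β := w.arg
  have hzre : z.re = r * Real.cos α := (Complex.norm_mul_cos_arg z).symm
  have hzim : z.im = r * Real.sin α := (Complex.norm_mul_sin_arg z).symm
  have hwre : w.re = r * Real.cos β := by
    rw [hab]; exact (Complex.norm_mul_cos_arg w).symm
  have hwim : w.im = r * Real.sin β := by
    rw [hab]; exact (Complex.norm_mul_sin_arg w).symm
  have him : (w - z).im = r * (2 * Real.sin ((β - α) / 2) * Real.cos ((β + α) / 2)) := by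
    rw [Complex.sub_im, hwim, hzim, ← mul_sub, Real.sin_sub_sin]
  have hre : (w - z).re = r * (-2 * Real.sin ((β + α) / 2) * Real.sin ((β - α) / 2)) := by
    rw [Complex.sub_re, hwre, hzre, ← mul_sub, Real.cos_sub_cos]
  have hd0 : 0 < (β - α) / 2 := by linarith
  have hd1 : (β - α) / 2 < π / 2 := by
    have := hz1.1; have := hw1.2; linarith
  have hs : 0 < Real.sin ((β - α) / 2) :=
    Real.sin_pos_of_pos_of_lt_pi hd0 (by linarith [Real.pi_pos])
  have hm : |(β + α) / 2| < θ := by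
    rw [abs_lt]
    exact ⟨by have := hz1.1; have := hw1.1; linarith,
           by have := hz1.2; have := hw1.2; linarith⟩
  have hmlt : |(β + α) / 2| < π / 2 := hm.trans hθ
  have hc : 0 < Real.cos ((β + α) / 2) :=
    Real.cos_pos_of_mem_Ioo ⟨(abs_lt.mp hmlt).1, (abs_lt.mp hmlt).2⟩
  constructor
  · rw [him]; positivity
  · rw [him, hre]
    have habs : |r * (-2 * Real.sin ((β + α) / 2) * Real.sin ((β - α) / 2))|
        = r * (2 * |Real.sin ((β + α) / 2)| * Real.sin ((β - α) / 2)) := by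
      rw [abs_mul, abs_mul, abs_of_pos hrpos, abs_of_pos hs, abs_mul]
      norm_num
    rw [habs]
    have hsin_lt : |Real.sin ((β + α) / 2)| < Real.tan θ * Real.cos ((β + α) / 2) :=
      abs_sin_lt_tan_mul_cos hθ hm
    calc r * (2 * |Real.sin ((β + α) / 2)| * Real.sin ((β - α) / 2))
        < r * (2 * (Real.tan θ * Real.cos ((β + α) / 2)) * Real.sin ((β - α) / 2)) := by
          apply mul_lt_mul_of_pos_left _ hrpos
          apply mul_lt_mul_of_pos_right _ hs
          exact mul_lt_mul_of_pos_left hsin_lt two_pos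
      _ = Real.tan θ * (r * (2 * Real.sin ((β - α) / 2) * Real.cos ((β + α) / 2))) := by ring

lemma arg_mem_of_cone (θ : ℝ) (hθ0 : 0 < θ) (hθ : θ < π / 2) {c : ℂ}
    (him : 0 < c.im) (hre : |c.re| < Real.tan θ * c.im) :
    c.arg ∈ Set.Ioo (π / 2 - θ) (π / 2 + θ) := by
  have hc0 : c ≠ 0 := by
    intro h; rw [h] at him; simp at him
  set φ := c.arg with hφ
  have h1 : 0 ≤ φ := Complex.arg_nonneg_iff.mpr him.le
  have h2 : φ < π := Complex.arg_lt_pi_iff.mpr (Or.inr him.ne')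
  have h3 : φ ≠ 0 := by
    intro h
    rw [Complex.arg_eq_zero_iff] at h
    exact him.ne' h.2
  have h4 : 0 < φ := lt_of_le_of_ne h1 (Ne.symm h3)
  have habs : 0 < ‖c‖ := norm_pos_iff.mpr hc0
  have hcos : c.re = ‖c‖ * Real.cos φ := (Complex.norm_mul_cos_arg c).symm
  have hsin : c.im = ‖c‖ * Real.sin φ := (Complex.norm_mul_sin_arg c).symm
  set ψ := π / 2 - φ with hψ
  have hψlt : |ψ| < π / 2 := by
    rw [abs_lt]; constructor <;> [linarith; linarith]
  have hcψ : Real.cos ψ = Real.sin φ := by rw [hψ, Real.cos_pi_div_two_sub]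
  have hsψ : Real.sin ψ = Real.cos φ := by rw [hψ, Real.sin_pi_div_two_sub]
  -- derive |sin ψ| < tan θ * cos ψ
  have hkey : |Real.sin ψ| < Real.tan θ * Real.cos ψ := by
    rw [hsψ, hcψ]
    have : |c.re| = ‖c‖ * |Real.cos φ| := by
      rw [hcos, abs_mul, abs_of_pos habs]
    rw [this, hsin] at hre
    have := hre
    nlinarith [habs]
  -- conclude |ψ| < θ
  have hψθ : |ψ| < θ := by
    by_contra h
    push_neg at h
    have hcψpos : 0 < Real.cos ψ := Real.cos_pos_of_mem_Ioo
      ⟨(abs_lt.mp hψlt).1, (abs_lt.mp hψlt).2⟩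
    have hlt : Real.sin |ψ| ≤ |Real.sin ψ| := by
      rcases abs_cases ψ with ⟨hh, _⟩ | ⟨hh, _⟩
      · rw [hh]; exact le_abs_self _
      · rw [hh, Real.sin_neg]; exact neg_le_abs _
    have htan : Real.tan θ ≤ Real.tan |ψ| := by
      rcases eq_or_lt_of_le h with hh | hh
      · rw [hh]
      · exact (Real.tan_lt_tan_of_nonneg_of_lt_pi_div_two hθ0.le hψlt hh).le
    have hsineq : Real.tan |ψ| * Real.cos |ψ| = Real.sin |ψ| := by
      rw [Real.tan_eq_sin_div_cos, div_mul_cancel₀]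
      exact (Real.cos_pos_of_mem_Ioo
        ⟨by linarith [abs_nonneg ψ, Real.pi_pos], hψlt⟩).ne'
    rw [Real.cos_abs] at hsineq
    nlinarith [hkey, hlt]
  rw [abs_lt] at hψθ
  exact ⟨by simp only [hψ] at hψθ; linarith [hψθ.2], by simp only [hψ] at hψθ; linarith [hψθ.1]⟩

theorem arm_lemma_endpoint_direction (m : ℕ) (u v : ℕ → ℂ)
    (h0 : u 0 = v 0)
    (hlen : ∀ j, 1 ≤ j → j ≤ m → ‖u j - u (j - 1)‖ = ‖v j - v (j - 1)‖)
    (hune : ∀ j, 1 ≤ j → j ≤ m → u j - u (j - 1) ≠ 0)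
    (hvne : ∀ j, 1 ≤ j → j ≤ m → v j - v (j - 1) ≠ 0)
    (huarg : ∀ j, 1 ≤ j → j ≤ m →
      Complex.arg (u j - u (j - 1)) ∈ Set.Ioo (-(π / 10)) (π / 10))
    (hvarg : ∀ j, 1 ≤ j → j ≤ m →
      Complex.arg (v j - v (j - 1)) ∈ Set.Ioo (-(π / 10)) (π / 10))
    (hmono : ∀ j, 1 ≤ j → j ≤ m →
      Complex.arg (u j - u (j - 1)) ≤ Complex.arg (v j - v (j - 1))) :
    v m = u m ∨ (v m - u m ≠ 0 ∧
      Complex.arg (v m - u m) ∈ Set.Ioo (π / 2 - π / 10) (π / 2 + π / 10)) := by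
  have hθ0 : (0:ℝ) < π / 10 := by positivity
  have hθ : π / 10 < π / 2 := by linarith [Real.pi_pos]
  have main : ∀ j, j ≤ m → (v j - u j = 0 ∨
      (0 < (v j - u j).im ∧ |(v j - u j).re| < Real.tan (π / 10) * (v j - u j).im)) := by
    intro j
    induction j with
    | zero => intro _; left; rw [h0, sub_self]
    | succ n ih =>
      intro hn
      have hn1 : 1 ≤ n + 1 := Nat.le_add_left 1 n
      have hd : (n + 1) - 1 = n := rfl
      have hkey := key_step (π / 10) hθ0 hθ
        (hune (n + 1) hn1 hn) (hlen (n + 1) hn1 hn)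
        (huarg (n + 1) hn1 hn) (hvarg (n + 1) hn1 hn)
        (hmono (n + 1) hn1 hn)
      rw [hd] at hkey
      have hrw : v (n + 1) - u (n + 1)
          = ((v (n + 1) - v n) - (u (n + 1) - u n)) + (v n - u n) := by ring
      rw [hrw]
      exact cone_add _ hkey (ih (Nat.le_of_succ_le hn))
  rcases main m le_rfl with h | ⟨h1, h2⟩
  · exact Or.inl (sub_eq_zero.mp h)
  · refine Or.inr ⟨?_, arg_mem_of_cone (π / 10) hθ0 hθ h1 h2⟩
    intro h; rw [h] at h1; simp at h1
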